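/- Let U ⊆ {a,b}^m be a set of forbidden descent words, and suppose φ ∈ L²([0,1]^m) is an eigenfunction of the associated descent-pattern operator T with nonzero eigenvalue λ, i.e., Tφ = λφ. Then the restriction of φ to each descent polytope P_u (u ∈ {a,b}^{m−1}) depends only on the first coordinate x₁ (almost everywhere). -/

import Mathlib

open MeasureTheory

noncomputable section

/-- The unit cube [0,1]^m. -/
def unitCube (m : ℕ) : Set (Fin m → ℝ) := Set.univ.pi fun _ => Set.Icc (0 : ℝ) 1

/-- Lebesgue measure restricted to the unit cube. -/
def cubeMeasure (m : ℕ) : Measure (Fin m → ℝ) := volume.restrict (unitCube m)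

/-- The vector (t, x₁, …, x_{m-1}) obtained by shifting x and prepending t. -/
def shiftIn {m : ℕ} (t : ℝ) (x : Fin m → ℝ) : Fin m → ℝ :=
  fun i => if i.val = 0 then t else x ⟨i.val - 1, by have := i.isLt; omega⟩

open Classical in
/-- The descent word of y ∈ [0,1]^{m+1}: entry i is `true` (a descent, letter b) if
y_{i+1} < y_i and `false` (an ascent, letter a) otherwise. -/
def descentWord {m : ℕ} (y : Fin (m + 1) → ℝ) : Fin m → Bool :=
  fun i => decide (y i.succ < y i.castSucc)

open Classical in
/-- χ(y) = 1 iff the descent word of y is not a forbidden word in U. -/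
def chiU {m : ℕ} (U : Set (Fin m → Bool)) : (Fin (m + 1) → ℝ) → ℝ :=
  fun y => if descentWord y ∈ U then 0 else 1

/-- The integral operator associated to descent pattern avoidance. -/
def TOp {m : ℕ} (χ : (Fin (m + 1) → ℝ) → ℝ) (f : (Fin m → ℝ) → ℝ) :
    (Fin m → ℝ) → ℝ :=
  fun x => ∫ t in Set.Icc (0 : ℝ) 1, χ (Fin.cons t x) * f (shiftIn t x)

/-- The descent polytope P_u ⊆ [0,1]^m of an ab-word u (encoded by u : ℕ → Bool,
`true` = b = descent, only the first m−1 letters being relevant). -/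
def descentPolytope (m : ℕ) (u : ℕ → Bool) : Set (Fin m → ℝ) :=
  {x | (∀ i, x i ∈ Set.Icc (0 : ℝ) 1) ∧
    ∀ (i : ℕ) (h : i + 1 < m),
      if u i then x ⟨i + 1, h⟩ ≤ x ⟨i, by omega⟩ else x ⟨i, by omega⟩ ≤ x ⟨i + 1, h⟩}

/-! ### Auxiliary material -/

open Filter

lemma measurableSet_unitCube (m : ℕ) : MeasurableSet (unitCube m) :=
  MeasurableSet.univ_pi fun _ => measurableSet_Icc

lemma cubeMeasure_ae_of_volume_ae {m : ℕ} {p : (Fin m → ℝ) → Prop}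
    (h : ∀ᵐ x ∂(volume : Measure (Fin m → ℝ)), p x) : ∀ᵐ x ∂cubeMeasure m, p x :=
  h.filter_mono (ae_mono Measure.restrict_le_self)

/-- A hyperplane `x i = x k` (for `i ≠ k`) is Lebesgue-null. -/
lemma null_eq_coords {n : ℕ} (i k : Fin (n + 1)) (h : i ≠ k) :
    (volume : Measure (Fin (n + 1) → ℝ)) {x | x i = x k} = 0 := by
  obtain ⟨l, hl⟩ := Fin.exists_succAbove_eq h.symm
  have hmp := volume_preserving_piFinSuccAbove (fun _ : Fin (n + 1) => ℝ) i
  have hmeas : MeasurableSet {p : ℝ × (Fin n → ℝ) | p.1 = p.2 l} :=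
    measurableSet_eq_fun measurable_fst ((measurable_pi_apply l).comp measurable_snd)
  have hset : {x : Fin (n + 1) → ℝ | x i = x k}
      = (MeasurableEquiv.piFinSuccAbove (fun _ => ℝ) i) ⁻¹'
          {p : ℝ × (Fin n → ℝ) | p.1 = p.2 l} := by
    ext x
    simp only [Set.mem_setOf_eq, Set.mem_preimage, MeasurableEquiv.piFinSuccAbove_apply,
      Fin.insertNthEquiv, Equiv.coe_fn_symm_mk, Fin.removeNth, hl]
  rw [hset, hmp.measure_preimage hmeas.nullMeasurableSet]
  rw [Measure.volume_eq_prod, Measure.measure_prod_null hmeas]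
  refine Eventually.of_forall fun a => ?_
  show (volume : Measure (Fin n → ℝ)) (Prod.mk a ⁻¹' {p : ℝ × (Fin n → ℝ) | p.1 = p.2 l}) = 0
  have hpre : (Prod.mk a ⁻¹' {p : ℝ × (Fin n → ℝ) | p.1 = p.2 l}) = {y : Fin n → ℝ | y l = a} := by
    ext y; simp [eq_comm]
  rw [hpre, MeasureTheory.volume_pi, Measure.pi_hyperplane]

lemma shiftIn_eq_cons {n : ℕ} (t : ℝ) (x : Fin (n + 1) → ℝ) :
    shiftIn t x = Fin.cons t (Fin.init x) := by
  funext i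
  refine Fin.cases ?_ (fun k => ?_) i
  · simp [shiftIn]
  · simp only [shiftIn, Fin.val_succ, Nat.succ_ne_zero, if_false, Fin.cons_succ,
      Fin.init, Nat.add_sub_cancel]
    exact congrArg x (Fin.ext (by simp))

/-- Pulling back a null set along `(t, x) ↦ shiftIn t x`. -/
lemma ae_ae_shiftIn_not_mem {n : ℕ} {N : Set (Fin (n + 1) → ℝ)}
    (hN : (volume : Measure (Fin (n + 1) → ℝ)) N = 0) :
    ∀ᵐ x ∂(volume : Measure (Fin (n + 1) → ℝ)), ∀ᵐ t ∂(volume : Measure ℝ),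
      shiftIn t x ∉ N := by
  obtain ⟨M, hNM, hMmeas, hM0⟩ := exists_measurable_superset_of_null hN
  set e0 := MeasurableEquiv.piFinSuccAbove (fun _ : Fin (n + 1) => ℝ) 0 with he0
  -- Step 1: for a.e. y, for a.e. t, `Fin.cons t y ∉ M`.
  have hS : (volume : Measure (ℝ × (Fin n → ℝ))) (e0.symm ⁻¹' M) = 0 := by
    rw [(MeasurePreserving.symm _
      (volume_preserving_piFinSuccAbove (fun _ : Fin (n + 1) => ℝ) 0)).measure_preimage
      hMmeas.nullMeasurableSet]
    exact hM0
  have hS' : (volume : Measure ((Fin n → ℝ) × ℝ)) (Prod.swap ⁻¹' (e0.symm ⁻¹' M)) = 0 := by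
    rw [Measure.volume_eq_prod] at hS ⊢
    rw [Measure.measurePreserving_swap.measure_preimage
      ((hMmeas.preimage e0.symm.measurable).nullMeasurableSet)]
    exact hS
  have h1 : ∀ᵐ y ∂(volume : Measure (Fin n → ℝ)), ∀ᵐ t ∂(volume : Measure ℝ),
      Fin.cons t y ∉ M := by
    have hae : ∀ᵐ p ∂((volume : Measure (Fin n → ℝ)).prod (volume : Measure ℝ)),
        e0.symm (p.2, p.1) ∉ M := by
      rw [← Measure.volume_eq_prod]
      rw [ae_iff]
      convert hS' using 2
      ext p
      simp [Set.mem_preimage, Prod.swap]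
    have h2 := Measure.ae_ae_of_ae_prod hae
    refine h2.mono fun y hy => hy.mono fun t ht => ?_
    have hcons : e0.symm (t, y) = Fin.cons t y := by
      simp [he0, MeasurableEquiv.piFinSuccAbove, Fin.insertNthEquiv_zero, Fin.consEquiv]
    rwa [hcons] at ht
  -- Step 2: transfer along `x ↦ Fin.init x`.
  have hB0 : (volume : Measure (Fin n → ℝ))
      {y | ¬ ∀ᵐ t ∂(volume : Measure ℝ), Fin.cons t y ∉ M} = 0 := ae_iff.mp h1
  obtain ⟨B', hBB', hB'meas, hB'0⟩ := exists_measurable_superset_of_null hB0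
  have hx0 : (volume : Measure (Fin (n + 1) → ℝ)) {x | Fin.init x ∈ B'} = 0 := by
    have hseteq : {x : Fin (n + 1) → ℝ | Fin.init x ∈ B'}
        = (MeasurableEquiv.piFinSuccAbove (fun _ => ℝ) (Fin.last n)) ⁻¹'
            (Set.univ ×ˢ B') := by
      ext x
      simp only [Set.mem_setOf_eq, Set.mem_preimage, MeasurableEquiv.piFinSuccAbove_apply,
        Set.mem_prod, Set.mem_univ, true_and, Fin.insertNthEquiv, Equiv.coe_fn_symm_mk,
        Fin.removeNth_last]
    rw [hseteq,
      (volume_preserving_piFinSuccAbove (fun _ : Fin (n + 1) => ℝ) (Fin.last n)).measure_preimage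
        (MeasurableSet.univ.prod hB'meas).nullMeasurableSet]
    rw [Measure.volume_eq_prod, Measure.prod_prod, hB'0, mul_zero]
  have hxae : ∀ᵐ x ∂(volume : Measure (Fin (n + 1) → ℝ)), (Fin.init x : Fin n → ℝ) ∉ B' := by
    rw [ae_iff]; simpa using hx0
  refine hxae.mono fun x hx' => ?_
  have hyB : ∀ᵐ t ∂(volume : Measure ℝ), Fin.cons t (Fin.init x) ∉ M := by
    by_contra hcon
    exact hx' (hBB' hcon)
  refine hyB.mono fun t ht hmem => ht ?_
  rw [← shiftIn_eq_cons] at ht ⊢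
  exact hNM hmem

/-- Truncation of a vector to its coordinates `0, …, j` (as a function on `ℕ`). -/
def trunc (m j : ℕ) (x : Fin m → ℝ) : ℕ → ℝ :=
  fun i => if h : i < m then (if i ≤ j then x ⟨i, h⟩ else 0) else 0

lemma trunc_of_le {m j : ℕ} (x : Fin m → ℝ) {i : ℕ} (h : i < m) (h2 : i ≤ j) :
    trunc m j x i = x ⟨i, h⟩ := by simp [trunc, h, h2]

/-- The inductive step: if `φ` depends a.e. on coordinates `0..j+1` on every descent
polytope, then it depends a.e. on coordinates `0..j` on every descent polytope. -/
lemma descent_step (n : ℕ) (U : Set (Fin (n + 1) → Bool)) (lam : ℝ) (hlam : lam ≠ 0)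
    (φ : (Fin (n + 1) → ℝ) → ℝ)
    (heig : ∀ᵐ x ∂cubeMeasure (n + 1), TOp (chiU U) φ x = lam * φ x)
    (j : ℕ)
    (ih : ∀ u : ℕ → Bool, ∃ g : (ℕ → ℝ) → ℝ, ∀ᵐ x ∂cubeMeasure (n + 1),
      x ∈ descentPolytope (n + 1) u → φ x = g (trunc (n + 1) (j + 1) x)) :
    ∀ u : ℕ → Bool, ∃ g : (ℕ → ℝ) → ℝ, ∀ᵐ x ∂cubeMeasure (n + 1),
      x ∈ descentPolytope (n + 1) u → φ x = g (trunc (n + 1) j x) := by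
  classical
  intro u
  choose gv hgv using ih
  -- the two possible descent words of `Fin.cons t x` / `shiftIn t x`
  set W : Bool → (Fin (n + 1) → Bool) := fun b i => if i.val = 0 then b else u (i.val - 1)
    with hW
  set v : Bool → (ℕ → Bool) := fun b i => if i = 0 then b else u (i - 1) with hv
  -- bad sets from the inductive hypothesis
  set N : Bool → Set (Fin (n + 1) → ℝ) := fun b =>
    {z | ¬ (z ∈ descentPolytope (n + 1) (v b) →
        φ z = gv (v b) (trunc (n + 1) (j + 1) z))} with hN
  have hN0 : ∀ b, (volume : Measure (Fin (n + 1) → ℝ)) (N b ∩ unitCube (n + 1)) = 0 := by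
    intro b
    have h := ae_iff.mp (hgv (v b))
    rwa [cubeMeasure, Measure.restrict_apply' (measurableSet_unitCube _)] at h
  have hEshift : ∀ᵐ x ∂cubeMeasure (n + 1), ∀ᵐ t ∂(volume : Measure ℝ),
      (shiftIn t x ∉ N true ∩ unitCube (n + 1)) ∧
      (shiftIn t x ∉ N false ∩ unitCube (n + 1)) := by
    have h1 := ae_ae_shiftIn_not_mem (hN0 true)
    have h2 := ae_ae_shiftIn_not_mem (hN0 false)
    refine cubeMeasure_ae_of_volume_ae ((h1.and h2).mono ?_)
    rintro x ⟨hx1, hx2⟩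
    exact hx1.and hx2
  have hdist : ∀ᵐ x ∂cubeMeasure (n + 1), ∀ i k : Fin (n + 1), i ≠ k → x i ≠ x k := by
    rw [ae_all_iff]
    intro i
    rw [ae_all_iff]
    intro k
    by_cases hik : i = k
    · subst hik
      exact Eventually.of_forall fun x h => absurd rfl h
    · refine cubeMeasure_ae_of_volume_ae ?_
      have h0 := null_eq_coords i k hik
      have : ∀ᵐ x ∂(volume : Measure (Fin (n + 1) → ℝ)), ¬ x i = x k := by
        rw [ae_iff]; simpa using h0
      exact this.mono fun x hx _ => hx
  have hcube : ∀ᵐ x ∂cubeMeasure (n + 1), x ∈ unitCube (n + 1) :=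
    ae_restrict_mem (measurableSet_unitCube _)
  -- the witness
  set g : (ℕ → ℝ) → ℝ := fun y => lam⁻¹ * ∫ t in Set.Icc (0 : ℝ) 1,
    (if W (decide (y 0 < t)) ∈ U then (0 : ℝ) else 1) *
      gv (v (decide (y 0 < t)))
        (fun i => if h : i < n + 1 then
          (if i ≤ j + 1 then (if i = 0 then t else y (i - 1)) else 0) else 0) with hg
  refine ⟨g, ?_⟩
  filter_upwards [heig, hdist, hcube, hEshift] with x hx1 hx2 hx3 hx4
  intro hxu
  -- strictness of the inequalities defining the polytope, a.e.
  have hstrict : ∀ (i : ℕ) (h : i + 1 < n + 1),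
      (u i = true → x ⟨i + 1, h⟩ < x ⟨i, by omega⟩) ∧
      (u i = false → x ⟨i, by omega⟩ < x ⟨i + 1, h⟩) := by
    intro i h
    have hne : x ⟨i + 1, h⟩ ≠ x ⟨i, by omega⟩ := hx2 _ _ (by simp [Fin.ext_iff])
    have hrel := hxu.2 i h
    constructor
    · intro hui
      rw [hui] at hrel
      simp only [if_true] at hrel
      exact lt_of_le_of_ne hrel hne
    · intro hui
      rw [hui] at hrel
      simp only [Bool.false_eq_true, if_false] at hrel
      exact lt_of_le_of_ne hrel hne.symm
  -- pointwise identification of the integrand, for a.e. t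
  have hint : ∀ᵐ t ∂(volume.restrict (Set.Icc (0 : ℝ) 1)),
      chiU U (Fin.cons t x) * φ (shiftIn t x)
        = (if W (decide (x 0 < t)) ∈ U then (0 : ℝ) else 1) *
            gv (v (decide (x 0 < t))) (trunc (n + 1) (j + 1) (shiftIn t x)) := by
    have htmem : ∀ᵐ t ∂(volume.restrict (Set.Icc (0 : ℝ) 1)), t ∈ Set.Icc (0 : ℝ) 1 :=
      ae_restrict_mem measurableSet_Icc
    filter_upwards [ae_restrict_of_ae hx4, htmem] with t hA hB
    set b := decide (x 0 < t) with hb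
    -- shiftIn t x lies in the unit cube
    have hc : shiftIn t x ∈ unitCube (n + 1) := by
      intro i _
      simp only [shiftIn]
      split
      · exact hB
      · exact hx3 _ (Set.mem_univ _)
    -- shiftIn t x lies in the descent polytope of `v b`
    have hpoly : shiftIn t x ∈ descentPolytope (n + 1) (v b) := by
      refine ⟨fun i => hc i (Set.mem_univ i), ?_⟩
      intro i h
      rcases i with _ | i'
      · -- i = 0
        have e1 : shiftIn t x ⟨1, h⟩ = x ⟨0, by omega⟩ := by simp [shiftIn]
        have e2 : shiftIn t x ⟨0, by omega⟩ = t := by simp [shiftIn]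
        have hv0 : v b 0 = b := by simp [hv]
        rw [hv0, e1, e2]
        rcases hbv : b with _ | _
        · rw [hb] at hbv
          simp only [decide_eq_false_iff_not, not_lt] at hbv
          simp only [Bool.false_eq_true, if_false]
          convert hbv using 2
          rfl
          rfl
        · rw [hb] at hbv
          rw [decide_eq_true_eq] at hbv
          simp only [if_true]
          refine le_of_lt ?_
          convert hbv using 2
          rfl
          rfl
      · -- i = i' + 1
        have e1 : shiftIn t x ⟨i' + 1 + 1, h⟩ = x ⟨i' + 1, by omega⟩ := by simp [shiftIn]
        have e2 : shiftIn t x ⟨i' + 1, by omega⟩ = x ⟨i', by omega⟩ := by simp [shiftIn]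
        have hvs : v b (i' + 1) = u i' := by simp [hv]
        rw [hvs, e1, e2]
        exact hxu.2 i' (by omega)
    -- identification of the descent word of `Fin.cons t x`
    have hword : descentWord (Fin.cons t x) = W b := by
      funext i
      refine Fin.cases ?_ (fun k => ?_) i
      · simp only [descentWord, Fin.castSucc_zero, Fin.cons_zero, Fin.cons_succ, hW]
        simp [hb]
      · have h' : k.val + 1 < n + 1 := k.succ.isLt
        have e1 : (k.succ : Fin (n + 1)) = ⟨k.val + 1, h'⟩ := Fin.ext (by simp)
        have e2 : (k.castSucc : Fin (n + 1)) = ⟨k.val, by omega⟩ := Fin.ext (by simp)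
        have hWk : W b k.succ = u k.val := by simp [hW]
        rw [hWk]
        have hyv : descentWord (Fin.cons t x) k.succ
            = decide (x k.succ < x k.castSucc) := by
          simp only [descentWord]
          rw [← Fin.succ_castSucc, Fin.cons_succ, Fin.cons_succ]
        rw [hyv, e1, e2]
        rcases hu : u k.val with _ | _
        · have hlt := (hstrict k.val h').2 hu
          simp [decide_eq_false_iff_not, not_lt, le_of_lt hlt]
        · have hlt := (hstrict k.val h').1 hu
          simp [hlt]
    -- value of φ at shiftIn t x via the inductive hypothesis
    have hφval : φ (shiftIn t x) = gv (v b) (trunc (n + 1) (j + 1) (shiftIn t x)) := by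
      have hnb : shiftIn t x ∉ N b := by
        rcases hbv : b with _ | _
        · exact fun hh => hA.2 ⟨hbv ▸ hh, hc⟩
        · exact fun hh => hA.1 ⟨hbv ▸ hh, hc⟩
      simp only [hN, Set.mem_setOf_eq, not_not] at hnb
      exact hnb hpoly
    rw [hφval]
    simp only [chiU, hword]
  -- assemble
  have hTOp : TOp (chiU U) φ x
      = ∫ t in Set.Icc (0 : ℝ) 1, chiU U (Fin.cons t x) * φ (shiftIn t x) := rfl
  have hy0 : trunc (n + 1) j x 0 = x 0 := by
    rw [trunc_of_le x (by omega) (by omega)]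
    congr 1
  have hSt : ∀ t : ℝ, (fun i => if h : i < n + 1 then
      (if i ≤ j + 1 then (if i = 0 then t else trunc (n + 1) j x (i - 1)) else 0) else 0)
        = trunc (n + 1) (j + 1) (shiftIn t x) := by
    intro t
    funext i
    by_cases h1 : i < n + 1
    · by_cases h2 : i ≤ j + 1
      · by_cases h3 : i = 0
        · subst h3
          rw [dif_pos h1, if_pos h2, if_pos rfl, trunc_of_le _ h1 h2]
          simp [shiftIn]
        · rw [dif_pos h1, if_pos h2, if_neg h3, trunc_of_le _ h1 h2]
          rw [trunc_of_le x (by omega) (by omega)]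
          simp only [shiftIn, h3, if_false]
      · rw [dif_pos h1, if_neg h2]
        simp [trunc, h1, h2]
    · rw [dif_neg h1]
      simp [trunc, h1]
  have hgval : g (trunc (n + 1) j x)
      = lam⁻¹ * ∫ t in Set.Icc (0 : ℝ) 1,
          (if W (decide (x 0 < t)) ∈ U then (0 : ℝ) else 1) *
            gv (v (decide (x 0 < t))) (trunc (n + 1) (j + 1) (shiftIn t x)) := by
    rw [hg]
    simp only [hy0]
    congr 1
    congr 1
    funext t
    beta_reduce
    rw [hSt t]
  calc φ x = lam⁻¹ * (lam * φ x) := by field_simp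
    _ = lam⁻¹ * TOp (chiU U) φ x := by rw [hx1]
    _ = lam⁻¹ * ∫ t in Set.Icc (0 : ℝ) 1,
          (if W (decide (x 0 < t)) ∈ U then (0 : ℝ) else 1) *
            gv (v (decide (x 0 < t))) (trunc (n + 1) (j + 1) (shiftIn t x)) := by
        rw [hTOp, integral_congr_ae hint]
    _ = g (trunc (n + 1) j x) := hgval.symm

/-- Downward induction: φ depends on coordinates `0..(n-k)` on each descent polytope. -/
lemma descent_key (n : ℕ) (U : Set (Fin (n + 1) → Bool)) (lam : ℝ) (hlam : lam ≠ 0)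
    (φ : (Fin (n + 1) → ℝ) → ℝ)
    (heig : ∀ᵐ x ∂cubeMeasure (n + 1), TOp (chiU U) φ x = lam * φ x) :
    ∀ k : ℕ, ∀ u : ℕ → Bool, ∃ g : (ℕ → ℝ) → ℝ, ∀ᵐ x ∂cubeMeasure (n + 1),
      x ∈ descentPolytope (n + 1) u → φ x = g (trunc (n + 1) (n - k) x) := by
  intro k
  induction k with
  | zero =>
    intro u
    refine ⟨fun y => φ (fun i => y i.val), Eventually.of_forall fun x _ => ?_⟩
    have h : (fun i : Fin (n + 1) => trunc (n + 1) (n - 0) x i.val) = x := by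
      funext i
      rw [trunc_of_le x i.isLt (by have := i.isLt; omega)]
    show φ x = φ (fun i : Fin (n + 1) => trunc (n + 1) (n - 0) x i.val)
    rw [h]
  | succ k ihk =>
    by_cases hnk : n - k = 0
    · have he : n - (k + 1) = n - k := by omega
      rw [he]
      exact ihk
    · have he : n - (k + 1) + 1 = n - k := by omega
      rw [← he] at ihk
      exact descent_step n U lam hlam φ heig (n - (k + 1)) ihk

/-- an eigenfunction φ ∈ L²([0,1]^m) of the descent-pattern operator T
with nonzero eigenvalue λ depends, on each descent polytope P_u, only on the first
coordinate x₁ (almost everywhere). -/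
theorem descent_eigenfunction_depends_on_first_coordinate (m : ℕ) (hm : 0 < m)
    (U : Set (Fin m → Bool)) (lam : ℝ) (hlam : lam ≠ 0)
    (φ : (Fin m → ℝ) → ℝ) (hφ : MemLp φ 2 (cubeMeasure m))
    (heig : ∀ᵐ x ∂cubeMeasure m, TOp (chiU U) φ x = lam * φ x) :
    ∀ u : ℕ → Bool, ∃ g : ℝ → ℝ,
      ∀ᵐ x ∂cubeMeasure m, x ∈ descentPolytope m u → φ x = g (x ⟨0, hm⟩) := by
  obtain ⟨n, rfl⟩ : ∃ n, m = n + 1 := ⟨m - 1, by omega⟩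
  intro u
  obtain ⟨g, hg⟩ := descent_key n U lam hlam φ heig n u
  refine ⟨fun r => g (fun i => if i = 0 then r else 0), ?_⟩
  refine hg.mono fun x hx hmem => ?_
  have htr : trunc (n + 1) (n - n) x = fun i => if i = 0 then x ⟨0, hm⟩ else 0 := by
    funext i
    rcases i with _ | i'
    · rw [trunc_of_le x (by omega) (by omega)]
      simp
    · have : ¬ (i' + 1 ≤ n - n) := by omega
      simp [trunc, this]
  rw [hx hmem, htr]

end
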